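/- Let an ADT be well-defined. Let P be a finite set of pairs (a, σ) of an integer a and a sort σ such that distinct pairs in P have distinct first components a whenever they share the same sort, and for each sort σ the number of pairs in P with second component σ is at most |𝕋_σ|. Let D ⊆ P and let dep be a function assigning to each (a, σ) ∈ D a tuple ⟨f, (c₁, σ₁), …, (c_n, σ_n)⟩ with f : σ₁ × ⋯ × σ_n → σ a constructor of the ADT and (c_j, σ_j) ∈ P for all j, such that: (i) dep is injective on pairs sharing the same constructor, i.e., distinct elements of D with the same assigned constructor f have different child tuples; and (ii) there is a function depth : P → ℤ with depth(a, σ) > depth(c_j, σ_j) for every (a, σ) ∈ D with children (c_j, σ_j). Then there exists an injective function γ : P → 𝕋 such that γ(a, σ) ∈ 𝕋_σ for every (a, σ) ∈ P, and γ(a, σ) = f(γ(c₁, σ₁), …, γ(c_n, σ_n)) whenever dep(a, σ) = ⟨f, (c₁, σ₁), …, (c_n, σ_n)⟩. -/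

import Mathlib

structure ADTSig where
  numSorts : ℕ
  numCtors : ℕ
  ctorArgs : Fin numCtors → List (Fin numSorts)
  ctorRes : Fin numCtors → Fin numSorts

namespace ADTSig

inductive Term (S : ADTSig) : Fin S.numSorts → Type where
  | mk (f : Fin S.numCtors)
      (args : (i : Fin (S.ctorArgs f).length) → Term S ((S.ctorArgs f).get i)) :
      Term S (S.ctorRes f)

def Term.size {S : ADTSig} : {σ : Fin S.numSorts} → Term S σ → ℕ
  | _, .mk _ args => 1 + ∑ i, (args i).size

def Term.head {S : ADTSig} : {σ : Fin S.numSorts} → Term S σ → Fin S.numCtors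
  | _, .mk f _ => f

def WellDefined (S : ADTSig) : Prop := ∀ σ, Nonempty (S.Term σ)

def ExpandingSort (S : ADTSig) (σ : Fin S.numSorts) : Prop :=
  ∀ n : ℕ, ∃ b : ℕ, ∀ b' ≥ b,
    (∀ t : S.Term σ, t.size ≠ b') ∨ n ≤ Nat.card {t : S.Term σ // t.size = b'}

def ExpandingADT (S : ADTSig) : Prop := ∀ σ, ExpandingSort S σ

end ADTSig

namespace MC
open ADTSig

variable {S : ADTSig}

abbrev Tm (S : ADTSig) := Σ σ : Fin S.numSorts, S.Term σ

lemma size_mk (f : Fin S.numCtors) (a : (i : Fin (S.ctorArgs f).length) → S.Term ((S.ctorArgs f).get i)) :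
    (Term.mk f a).size = 1 + ∑ i, (a i).size := rfl

lemma size_pos : ∀ {σ : Fin S.numSorts} (t : S.Term σ), 1 ≤ t.size
  | _, .mk _ _ => Nat.le_add_right 1 _

lemma size_cast {σ τ : Fin S.numSorts} (h : σ = τ) (t : S.Term σ) :
    (cast (congrArg S.Term h) t).size = t.size := by subst h; rfl

lemma arg_size_le (f : Fin S.numCtors) (a : (i : Fin (S.ctorArgs f).length) → S.Term ((S.ctorArgs f).get i))
    (j : Fin (S.ctorArgs f).length) : (a j).size + 1 ≤ (Term.mk f a).size := by
  rw [size_mk, Nat.add_comm]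
  have : (a j).size ≤ ∑ i, (a i).size :=
    Finset.single_le_sum (f := fun i => (a i).size) (fun i _ => Nat.zero_le _) (Finset.mem_univ j)
  omega

lemma headT_mk (f : Fin S.numCtors) (a) : (Term.mk (S := S) f a).head = f := rfl

/-- injection principle in sigma world -/
lemma tm_mk_inj {f g : Fin S.numCtors}
    {a : (i : Fin (S.ctorArgs f).length) → S.Term ((S.ctorArgs f).get i)}
    {b : (i : Fin (S.ctorArgs g).length) → S.Term ((S.ctorArgs g).get i)}
    (h : (⟨S.ctorRes f, Term.mk f a⟩ : Tm S) = ⟨S.ctorRes g, Term.mk g b⟩) :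
    ∃ _ : f = g, ∀ (j : ℕ) (hj : j < (S.ctorArgs f).length) (hj' : j < (S.ctorArgs g).length),
      (⟨(S.ctorArgs f).get ⟨j, hj⟩, a ⟨j, hj⟩⟩ : Tm S) = ⟨(S.ctorArgs g).get ⟨j, hj'⟩, b ⟨j, hj'⟩⟩ := by
  have hfg : f = g := by
    have := congrArg (fun t : Tm S => t.2.head) h
    exact this
  subst hfg
  refine ⟨rfl, ?_⟩
  have h2 : Term.mk f a = Term.mk f b := by injection h
  have hab : a = b := by injection h2
  subst hab
  intro j hj hj'
  rfl


/-- sigma-terms of size ≤ n form a finite type -/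
lemma finite_bounded_tm : ∀ (n : ℕ), Finite {u : Tm S // u.2.size ≤ n} := by
  intro n
  induction n with
  | zero =>
    have : IsEmpty {u : Tm S // u.2.size ≤ 0} := by
      constructor; rintro ⟨⟨σ, t⟩, ht⟩; have := size_pos t; simp at ht; omega
    infer_instance
  | succ n ih =>
    let F : {u : Tm S // u.2.size ≤ n + 1} →
        Σ f : Fin S.numCtors, (Fin (S.ctorArgs f).length → {u : Tm S // u.2.size ≤ n}) :=
      fun x => match x with
      | ⟨⟨_, .mk f a⟩, h⟩ => ⟨f, fun i => ⟨⟨_, a i⟩, by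
          have h1 := arg_size_le f a i
          have h2 : (Term.mk f a).size ≤ n + 1 := h
          show (a i).size ≤ n
          omega⟩⟩
    have hF : Function.Injective F := by
      rintro ⟨⟨σ, t⟩, ht⟩ ⟨⟨σ', u⟩, hu⟩ he
      cases t with
      | mk f a =>
      cases u with
      | mk g b =>
      obtain ⟨hfg, hsnd⟩ := Sigma.mk.inj_iff.mp he
      subst hfg
      have h2 := eq_of_heq hsnd
      have hab : a = b := by
        funext i
        have h3 := congrArg Subtype.val (congrFun h2 i)
        simp only at h3
        have h4 : HEq (a i) (b i) := (Sigma.mk.inj_iff.mp h3).2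
        exact eq_of_heq h4
      subst hab
      rfl
    haveI : Finite (Σ f : Fin S.numCtors, (Fin (S.ctorArgs f).length → {u : Tm S // u.2.size ≤ n})) := by
      infer_instance
    exact Finite.of_injective F hF

lemma finite_bounded (n : ℕ) (σ : Fin S.numSorts) : Finite {t : S.Term σ // t.size ≤ n} := by
  haveI := finite_bounded_tm (S := S) n
  have : Function.Injective (fun t : {t : S.Term σ // t.size ≤ n} =>
      (⟨⟨σ, t.1⟩, t.2⟩ : {u : Tm S // u.2.size ≤ n})) := by
    rintro ⟨t, ht⟩ ⟨u, hu⟩ h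
    simp only [Subtype.mk.injEq] at h
    have := eq_of_heq (Sigma.mk.inj_iff.mp h).2
    simpa using this
  exact Finite.of_injective _ this

lemma exists_big (σ : Fin S.numSorts) (h : Infinite (S.Term σ)) (B : ℕ) :
    ∃ t : S.Term σ, B < t.size := by
  by_contra hc
  push_neg at hc
  haveI := finite_bounded (S := S) B σ
  have : Function.Injective (fun t : S.Term σ => (⟨t, hc t⟩ : {t : S.Term σ // t.size ≤ B})) := by
    intro t u h; exact congrArg Subtype.val h
  exact (Finite.of_injective _ this).not_infinite h

/-- max size of terms of a (finite) sort -/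
noncomputable def Hs (S : ADTSig) (σ : Fin S.numSorts) : ℕ :=
  sSup {n : ℕ | ∃ t : S.Term σ, t.size = n}

lemma size_le_Hs {σ : Fin S.numSorts} (hfin : Finite (S.Term σ)) (t : S.Term σ) :
    t.size ≤ Hs S σ := by
  apply le_csSup
  · have : Set.Finite {n : ℕ | ∃ t : S.Term σ, t.size = n} := by
      have : {n : ℕ | ∃ t : S.Term σ, t.size = n} = Set.range (fun t : S.Term σ => t.size) := by
        ext n; simp [Set.range, eq_comm]
      rw [this]
      exact Set.finite_range _
    exact this.bddAbove
  · exact ⟨t, rfl⟩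

lemma exists_Hs {σ : Fin S.numSorts} (hne : Nonempty (S.Term σ)) (hfin : Finite (S.Term σ)) :
    ∃ t : S.Term σ, t.size = Hs S σ := by
  have hmem : Hs S σ ∈ {n : ℕ | ∃ t : S.Term σ, t.size = n} := by
    apply Nat.sSup_mem
    · obtain ⟨t⟩ := hne; exact ⟨t.size, t, rfl⟩
    · have : {n : ℕ | ∃ t : S.Term σ, t.size = n} = Set.range (fun t : S.Term σ => t.size) := by
        ext n; simp [Set.range, eq_comm]
      rw [this]
      exact (Set.finite_range _).bddAbove
  exact hmem

/-- a sort feeding into a finite sort is finite and has smaller max size -/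
lemma child_sort_lemma (hS : S.WellDefined) (f : Fin S.numCtors)
    (hfin : Finite (S.Term (S.ctorRes f))) (j : Fin (S.ctorArgs f).length) :
    Finite (S.Term ((S.ctorArgs f).get j)) ∧ Hs S ((S.ctorArgs f).get j) < Hs S (S.ctorRes f) := by
  classical
  set τ := (S.ctorArgs f).get j
  let e : S.Term τ → S.Term (S.ctorRes f) := fun t =>
    Term.mk f (fun i => if h : i = j then cast (by rw [h]) t else Classical.choice (hS _))
  have he : Function.Injective e := by
    intro t u h
    have h2 : (fun i => if h : i = j then cast (by rw [h] : S.Term τ = S.Term ((S.ctorArgs f).get i)) t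
        else Classical.choice (hS _)) = (fun i => if h : i = j then cast (by rw [h]) u
        else Classical.choice (hS _)) := by injection h
    have := congrFun h2 j
    simpa using this
  have hfinτ : Finite (S.Term τ) := Finite.of_injective e he
  refine ⟨hfinτ, ?_⟩
  obtain ⟨t, ht⟩ := exists_Hs (hS τ) hfinτ
  have h1 : (e t).size ≤ Hs S (S.ctorRes f) := size_le_Hs hfin _
  have h2 : t.size + 1 ≤ (e t).size := by
    have := arg_size_le f (fun i => if h : i = j then cast (by rw [h]) t else Classical.choice (hS _)) j
    simpa using this
  omega


/-- bundled instance data -/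
structure Ctx (S : ADTSig) where
  P : Finset (ℤ × Fin S.numSorts)
  D : Finset (ℤ × Fin S.numSorts)
  depF : ℤ × Fin S.numSorts → Fin S.numCtors
  depC : ℤ × Fin S.numSorts → ℕ → ℤ
  depth : ℤ × Fin S.numSorts → ℤ
  hD : D ⊆ P
  hres : ∀ p ∈ D, S.ctorRes (depF p) = p.2
  hP : ∀ p ∈ D, ∀ j : Fin (S.ctorArgs (depF p)).length,
    (depC p j.val, (S.ctorArgs (depF p)).get j) ∈ P
  hinj : ∀ p ∈ D, ∀ q ∈ D, depF p = depF q →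
    (∀ j < (S.ctorArgs (depF p)).length, depC p j = depC q j) → p = q
  hdeplt : ∀ p ∈ D, ∀ j : Fin (S.ctorArgs (depF p)).length,
    depth (depC p j.val, (S.ctorArgs (depF p)).get j) < depth p

namespace Ctx

variable {S : ADTSig} (C : Ctx S)

def child (p : ℤ × Fin S.numSorts) (j : Fin (S.ctorArgs (C.depF p)).length) :
    ℤ × Fin S.numSorts :=
  (C.depC p j.val, (S.ctorArgs (C.depF p)).get j)

lemma child_mem {p : ℤ × Fin S.numSorts} (hp : p ∈ C.D) (j) : C.child p j ∈ C.P :=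
  C.hP p hp j

lemma child_lt {p : ℤ × Fin S.numSorts} (hp : p ∈ C.D) (j) :
    C.depth (C.child p j) < C.depth p := C.hdeplt p hp j

noncomputable def bld (v : ∀ p : ℤ × Fin S.numSorts, S.Term p.2) :
    ℕ → ∀ p : ℤ × Fin S.numSorts, S.Term p.2
  | 0 => v
  | (n+1) => fun p =>
      if h : p ∈ C.D then
        cast (congrArg S.Term (C.hres p h))
          (Term.mk (C.depF p) (fun j => bld v n (C.child p j)))
      else v p

def rnk (p : ℤ × Fin S.numSorts) : ℕ := (C.P.filter (fun q => C.depth q < C.depth p)).card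

lemma rnk_le (p : ℤ × Fin S.numSorts) : C.rnk p ≤ C.P.card :=
  Finset.card_le_card (Finset.filter_subset _ _)

lemma rnk_child_lt {p : ℤ × Fin S.numSorts} (hp : p ∈ C.D)
    (j : Fin (S.ctorArgs (C.depF p)).length) :
    C.rnk (C.child p j) < C.rnk p := by
  apply Finset.card_lt_card
  constructor
  · intro q hq
    simp only [Finset.mem_filter] at hq ⊢
    exact ⟨hq.1, hq.2.trans (C.child_lt hp j)⟩
  · intro hsub
    have h1 : C.child p j ∈ C.P.filter (fun q => C.depth q < C.depth p) := by
      simp only [Finset.mem_filter]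
      exact ⟨C.child_mem hp j, C.child_lt hp j⟩
    have h2 := hsub h1
    simp only [Finset.mem_filter] at h2
    omega

lemma bld_stable (v : ∀ p : ℤ × Fin S.numSorts, S.Term p.2) :
    ∀ n, ∀ p, C.rnk p + 1 ≤ n → C.bld v (n+1) p = C.bld v n p := by
  intro n
  induction n with
  | zero => intro p h; omega
  | succ n ih =>
    intro p h
    by_cases hp : p ∈ C.D
    · show dite _ _ _ = dite _ _ _
      rw [dif_pos hp, dif_pos hp]
      congr 1
      congr 1
      funext j
      exact ih (C.child p j) (by have := C.rnk_child_lt hp j; omega)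
    · show dite _ _ _ = dite _ _ _
      rw [dif_neg hp, dif_neg hp]

noncomputable def gb (v : ∀ p : ℤ × Fin S.numSorts, S.Term p.2)
    (p : ℤ × Fin S.numSorts) : S.Term p.2 :=
  C.bld v (C.P.card + 1) p

lemma gb_free (v) {p : ℤ × Fin S.numSorts} (hp : p ∉ C.D) :
    C.gb v p = v p := by
  show dite _ _ _ = _
  rw [dif_neg hp]

lemma gb_dep (v) {p : ℤ × Fin S.numSorts} (hp : p ∈ C.D) :
    C.gb v p = cast (congrArg S.Term (C.hres p hp))
      (Term.mk (C.depF p) (fun j => C.gb v (C.child p j))) := by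
  show dite _ _ _ = _
  rw [dif_pos hp]
  congr 1
  congr 1
  funext j
  exact (C.bld_stable v C.P.card (C.child p j)
    (by have h1 := C.rnk_child_lt hp j
        have h2 := C.rnk_le p
        omega)).symm

noncomputable def Gm (v : ∀ p : ℤ × Fin S.numSorts, S.Term p.2)
    (p : ℤ × Fin S.numSorts) : Tm S :=
  ⟨p.2, C.gb v p⟩

lemma sigma_cast {σ τ : Fin S.numSorts} (h : σ = τ) (t : S.Term σ) :
    (⟨τ, cast (congrArg S.Term h) t⟩ : Tm S) = ⟨σ, t⟩ := by subst h; rfl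

lemma Gm_dep (v) {p : ℤ × Fin S.numSorts} (hp : p ∈ C.D) :
    C.Gm v p = ⟨S.ctorRes (C.depF p),
      Term.mk (C.depF p) (fun j => C.gb v (C.child p j))⟩ := by
  show (⟨p.2, C.gb v p⟩ : Tm S) = _
  rw [C.gb_dep v hp]
  exact sigma_cast (C.hres p hp) _

lemma Gm_sort (v) {p q : ℤ × Fin S.numSorts} (h : C.Gm v p = C.Gm v q) :
    p.2 = q.2 := congrArg Sigma.fst h

lemma Gm_size (v) {p q : ℤ × Fin S.numSorts} (h : C.Gm v p = C.Gm v q) :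
    (C.gb v p).size = (C.gb v q).size :=
  congrArg (fun t : Tm S => t.2.size) h

/-- a forced-forced collision descends to a collision of distinct children -/
lemma descend (v) {p q : ℤ × Fin S.numSorts} (hp : p ∈ C.D) (hq : q ∈ C.D) (hne : p ≠ q)
    (h : C.Gm v p = C.Gm v q) :
    ∃ (j : ℕ) (hj : j < (S.ctorArgs (C.depF p)).length)
      (hj' : j < (S.ctorArgs (C.depF q)).length),
      C.child p ⟨j, hj⟩ ≠ C.child q ⟨j, hj'⟩ ∧
      C.Gm v (C.child p ⟨j, hj⟩) = C.Gm v (C.child q ⟨j, hj'⟩) := by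
  rw [C.Gm_dep v hp, C.Gm_dep v hq] at h
  obtain ⟨hfg, hch⟩ := tm_mk_inj h
  have hex : ∃ j < (S.ctorArgs (C.depF p)).length, C.depC p j ≠ C.depC q j := by
    by_contra hc
    push_neg at hc
    exact hne (C.hinj p hp q hq hfg hc)
  obtain ⟨j, hj, hne'⟩ := hex
  have hj' : j < (S.ctorArgs (C.depF q)).length := by rw [← hfg]; exact hj
  refine ⟨j, hj, hj', ?_, ?_⟩
  · intro hcc
    exact hne' (congrArg Prod.fst hcc)
  · exact hch j hj hj'

/-- if there is any collision, there is one with a free first member -/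
lemma exists_free_collision (v)
    (hcol : ∃ p ∈ C.P, ∃ q ∈ C.P, p ≠ q ∧ C.Gm v p = C.Gm v q) :
    ∃ p ∈ C.P, ∃ q ∈ C.P, p ≠ q ∧ p ∉ C.D ∧ C.Gm v p = C.Gm v q := by
  classical
  let Q := (C.P ×ˢ C.P).filter (fun pq => pq.1 ≠ pq.2 ∧ C.Gm v pq.1 = C.Gm v pq.2)
  have hQne : Q.Nonempty := by
    obtain ⟨p, hp, q, hq, hne, heq⟩ := hcol
    exact ⟨(p, q), by simp [Q, Finset.mem_filter, Finset.mem_product, hp, hq, hne, heq]⟩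
  obtain ⟨pq, hmem, hmin⟩ := Q.exists_min_image (fun pq => C.rnk pq.1 + C.rnk pq.2) hQne
  obtain ⟨p, q⟩ := pq
  simp only [Q, Finset.mem_filter, Finset.mem_product] at hmem
  obtain ⟨⟨hpP, hqP⟩, hne, heq⟩ := hmem
  by_cases hpD : p ∈ C.D
  · by_cases hqD : q ∈ C.D
    · exfalso
      obtain ⟨j, hj, hj', hcne, hceq⟩ := C.descend v hpD hqD hne heq
      have hmem2 : (C.child p ⟨j, hj⟩, C.child q ⟨j, hj'⟩) ∈ Q := by
        simp only [Q, Finset.mem_filter, Finset.mem_product]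
        exact ⟨⟨C.child_mem hpD _, C.child_mem hqD _⟩, hcne, hceq⟩
      have h3 := hmin _ hmem2
      have h4 := C.rnk_child_lt hpD ⟨j, hj⟩
      have h5 := C.rnk_child_lt hqD ⟨j, hj'⟩
      simp only at h3
      omega
    · exact ⟨q, hqP, p, hpP, hne.symm, hqD, heq.symm⟩
  · exact ⟨p, hpP, q, hqP, hne, hpD, heq⟩

/-- updating a free variable of a finite sort does not change values at
finite sorts of max-size ≤ that of the updated sort -/
lemma unchanged_fin (hS : S.WellDefined) (v) {x : ℤ × Fin S.numSorts} (u : S.Term x.2) :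
    ∀ p, p ≠ x → Finite (S.Term p.2) → Hs S p.2 ≤ Hs S x.2 →
      C.gb (Function.update v x u) p = C.gb v p := by
  suffices h : ∀ n p, C.rnk p ≤ n → p ≠ x → Finite (S.Term p.2) → Hs S p.2 ≤ Hs S x.2 →
      C.gb (Function.update v x u) p = C.gb v p by
    intro p
    exact h (C.rnk p) p le_rfl
  intro n
  induction n using Nat.strong_induction_on with
  | _ n ih =>
    intro p hr hne hfin hH
    by_cases hp : p ∈ C.D
    · rw [C.gb_dep _ hp, C.gb_dep _ hp]
      congr 1
      congr 1
      funext j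
      have hresp : S.ctorRes (C.depF p) = p.2 := C.hres p hp
      have hfinres : Finite (S.Term (S.ctorRes (C.depF p))) := by rw [hresp]; exact hfin
      obtain ⟨hfj, hHj⟩ := child_sort_lemma hS (C.depF p) hfinres j
      have hHj' : Hs S ((S.ctorArgs (C.depF p)).get j) < Hs S p.2 := by
        rw [← hresp]; exact hHj
      have hchne : C.child p j ≠ x := by
        intro hcc
        have hx2 : x.2 = (S.ctorArgs (C.depF p)).get j := by rw [← hcc]; rfl
        rw [hx2] at hH
        omega
      exact ih (C.rnk (C.child p j)) (lt_of_lt_of_le (C.rnk_child_lt hp j) hr)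
        (C.child p j) le_rfl hchne hfj (le_of_lt (lt_of_lt_of_le hHj' hH))
    · rw [C.gb_free _ hp, C.gb_free _ hp]
      exact Function.update_of_ne hne u v

/-- updating a free variable of an infinite sort does not change values at finite sorts -/
lemma unchanged_inf (hS : S.WellDefined) (v) {x : ℤ × Fin S.numSorts} (u : S.Term x.2)
    (hxinf : ¬ Finite (S.Term x.2)) :
    ∀ p, Finite (S.Term p.2) → C.gb (Function.update v x u) p = C.gb v p := by
  suffices h : ∀ n p, C.rnk p ≤ n → Finite (S.Term p.2) →
      C.gb (Function.update v x u) p = C.gb v p by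
    intro p
    exact h (C.rnk p) p le_rfl
  intro n
  induction n using Nat.strong_induction_on with
  | _ n ih =>
    intro p hr hfin
    have hne : p ≠ x := by
      intro hpx
      subst hpx
      exact hxinf hfin
    by_cases hp : p ∈ C.D
    · rw [C.gb_dep _ hp, C.gb_dep _ hp]
      congr 1
      congr 1
      funext j
      have hresp : S.ctorRes (C.depF p) = p.2 := C.hres p hp
      have hfinres : Finite (S.Term (S.ctorRes (C.depF p))) := by rw [hresp]; exact hfin
      obtain ⟨hfj, _⟩ := child_sort_lemma hS (C.depF p) hfinres j
      exact ih (C.rnk (C.child p j)) (lt_of_lt_of_le (C.rnk_child_lt hp j) hr)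
        (C.child p j) le_rfl hfj
    · rw [C.gb_free _ hp, C.gb_free _ hp]
      exact Function.update_of_ne hne u v

/-- updating a free variable: every other value is unchanged or bigger than `u` -/
lemma update_big (v) {x : ℤ × Fin S.numSorts} (hx : x ∉ C.D) (u : S.Term x.2) :
    ∀ p, p ≠ x →
      C.gb (Function.update v x u) p = C.gb v p ∨
        u.size < (C.gb (Function.update v x u) p).size := by
  suffices h : ∀ n p, C.rnk p ≤ n → p ≠ x →
      C.gb (Function.update v x u) p = C.gb v p ∨
        u.size < (C.gb (Function.update v x u) p).size by
    intro p
    exact h (C.rnk p) p le_rfl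
  intro n
  induction n using Nat.strong_induction_on with
  | _ n ih =>
    intro p hr hne
    by_cases hp : p ∈ C.D
    · by_cases hall : ∀ j, C.child p j ≠ x ∧
          C.gb (Function.update v x u) (C.child p j) = C.gb v (C.child p j)
      · left
        rw [C.gb_dep _ hp, C.gb_dep _ hp]
        congr 1
        congr 1
        funext j
        exact (hall j).2
      · right
        push_neg at hall
        obtain ⟨j, hj⟩ := hall
        have hbig : u.size ≤ (C.gb (Function.update v x u) (C.child p j)).size := by
          by_cases hcx : C.child p j = x
          · have h1 : (C.gb (Function.update v x u) (C.child p j)).size =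
                (C.gb (Function.update v x u) x).size := by
              rw [hcx]
            rw [h1, C.gb_free _ hx, Function.update_self]
          · have h2 := hj hcx
            rcases ih (C.rnk (C.child p j)) (lt_of_lt_of_le (C.rnk_child_lt hp j) hr)
              (C.child p j) le_rfl hcx with h3 | h3
            · exact absurd h3 h2
            · omega
        rw [C.gb_dep _ hp]
        rw [size_cast (C.hres p hp)]
        have h4 := arg_size_le (C.depF p)
          (fun j => C.gb (Function.update v x u) (C.child p j)) j
        have h5 : (C.gb (Function.update v x u) (C.child p j)).size + 1 ≤ (Term.mk (C.depF p) fun j => C.gb (Function.update v x u) (C.child p j)).size := h4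
        omega
    · left
      rw [C.gb_free _ hp, C.gb_free _ hp]
      exact Function.update_of_ne hne u v


/-! ### Counting and potentials -/

def PSet (σ : Fin S.numSorts) : Set (ℤ × Fin S.numSorts) := {p | p ∈ C.P ∧ p.2 = σ}

lemma PSet_finite (σ) : (C.PSet σ).Finite :=
  Set.Finite.subset C.P.finite_toSet (fun p hp => hp.1)

noncomputable def used (v : ∀ p : ℤ × Fin S.numSorts, S.Term p.2) (σ : Fin S.numSorts) : ℕ := (C.Gm v '' C.PSet σ).ncard

lemma used_le (v) (σ) : C.used v σ ≤ C.P.card := by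
  have h1 : (C.Gm v '' C.PSet σ).ncard ≤ (C.PSet σ).ncard :=
    Set.ncard_image_le (C.PSet_finite σ)
  have h2 : (C.PSet σ).ncard ≤ (↑C.P : Set (ℤ × Fin S.numSorts)).ncard :=
    Set.ncard_le_ncard (fun p hp => hp.1) C.P.finite_toSet
  rw [Set.ncard_coe_finset] at h2
  exact h1.trans h2

noncomputable def KK : ℕ := S.numSorts * C.P.card + 1

lemma KK_pos : 0 < C.KK := Nat.succ_pos _

open Classical in
noncomputable def HmaxS (S : ADTSig) : ℕ :=
  Finset.univ.sup (fun σ : Fin S.numSorts => if Finite (S.Term σ) then Hs S σ else 0)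

lemma Hs_le_HmaxS {σ : Fin S.numSorts} (h : Finite (S.Term σ)) : Hs S σ ≤ HmaxS S := by
  classical
  have h2 := Finset.le_sup (f := fun σ : Fin S.numSorts => if Finite (S.Term σ) then Hs S σ else 0)
    (Finset.mem_univ σ)
  simp only [if_pos h] at h2
  rw [HmaxS]
  convert h2 using 2

open Classical in
noncomputable def wt (v : ∀ p : ℤ × Fin S.numSorts, S.Term p.2) (σ : Fin S.numSorts) : ℕ :=
  if Finite (S.Term σ) then C.used v σ * C.KK ^ (HmaxS S - Hs S σ) else 0

noncomputable def Phi (v : ∀ p : ℤ × Fin S.numSorts, S.Term p.2) : ℕ := ∑ σ : Fin S.numSorts, C.wt v σ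

noncomputable def Phimax : ℕ := S.numSorts * (C.P.card * C.KK ^ HmaxS S)

lemma wt_le (v) (σ) : C.wt v σ ≤ C.P.card * C.KK ^ HmaxS S := by
  classical
  rw [wt]
  split
  · have h1 := C.used_le v σ
    have h2 : C.KK ^ (HmaxS S - Hs S σ) ≤ C.KK ^ HmaxS S :=
      Nat.pow_le_pow_right C.KK_pos (Nat.sub_le _ _)
    exact Nat.mul_le_mul h1 h2
  · exact Nat.zero_le _

lemma Phi_le (v) : C.Phi v ≤ C.Phimax := by
  have := Finset.sum_le_card_nsmul Finset.univ (C.wt v) (C.P.card * C.KK ^ HmaxS S)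
    (fun σ _ => C.wt_le v σ)
  simpa [Phi, Phimax, Finset.card_univ, mul_comm] using this

def colset (v : ∀ p : ℤ × Fin S.numSorts, S.Term p.2) : Set ((ℤ × Fin S.numSorts) × (ℤ × Fin S.numSorts)) :=
  {pq | pq.1 ∈ C.P ∧ pq.2 ∈ C.P ∧ pq.1 ≠ pq.2 ∧ pq.1 ∉ C.D ∧ C.Gm v pq.1 = C.Gm v pq.2}

lemma colset_finite (v) : (C.colset v).Finite := by
  apply Set.Finite.subset (Set.Finite.prod C.P.finite_toSet C.P.finite_toSet)
  rintro ⟨p, q⟩ ⟨h1, h2, _⟩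
  exact ⟨h1, h2⟩

noncomputable def cnt (v : ∀ p : ℤ × Fin S.numSorts, S.Term p.2) : ℕ := (C.colset v).ncard

lemma cnt_le (v) : C.cnt v ≤ C.P.card * C.P.card := by
  have h1 : (C.colset v).ncard ≤ ((↑C.P : Set (ℤ × Fin S.numSorts)) ×ˢ (↑C.P : Set (ℤ × Fin S.numSorts))).ncard := by
    apply Set.ncard_le_ncard _ (Set.Finite.prod C.P.finite_toSet C.P.finite_toSet)
    rintro ⟨p, q⟩ ⟨hp, hq, _⟩
    exact ⟨hp, hq⟩
  rwa [← Finset.coe_product, Set.ncard_coe_finset, Finset.card_product] at h1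


lemma PSet_coe (σ : Fin S.numSorts) :
    C.PSet σ = ↑(C.P.filter (fun p => p.2 = σ)) := by
  ext p
  simp [PSet]

lemma Gm_congr (v v' : ∀ p : ℤ × Fin S.numSorts, S.Term p.2) {p : ℤ × Fin S.numSorts}
    (h : C.gb v' p = C.gb v p) : C.Gm v' p = C.Gm v p := by
  show (⟨p.2, C.gb v' p⟩ : Tm S) = ⟨p.2, C.gb v p⟩
  rw [h]

/-- repair step at a finite sort: the potential strictly increases -/
lemma fin_repair (hS : S.WellDefined)
    (hcardN : ∀ σ, Finite (S.Term σ) → (C.P.filter (fun p => p.2 = σ)).card ≤ Nat.card (S.Term σ))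
    (v : ∀ p : ℤ × Fin S.numSorts, S.Term p.2) {x q : ℤ × Fin S.numSorts}
    (hxP : x ∈ C.P) (hqP : q ∈ C.P) (hne : x ≠ q) (hxD : x ∉ C.D)
    (heq : C.Gm v x = C.Gm v q) (hfx : Finite (S.Term x.2)) :
    ∃ v', C.Phi v < C.Phi v' := by
  classical
  set σ := x.2 with hσ
  have hq2 : q.2 = σ := (C.Gm_sort v heq).symm
  set V : Set (Tm S) := C.Gm v '' C.PSet σ with hV
  have hVfin : V.Finite := Set.Finite.image _ (C.PSet_finite σ)
  have hxPS : x ∈ C.PSet σ := ⟨hxP, rfl⟩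
  have hqPS : q ∈ C.PSet σ \ {x} := ⟨⟨hqP, hq2⟩, by simp [hne.symm]⟩
  have hVeq : C.Gm v '' (C.PSet σ \ {x}) = V := by
    apply Set.Subset.antisymm
    · exact Set.image_mono Set.diff_subset
    · rintro t ⟨p, hp, rfl⟩
      by_cases hpx : p = x
      · subst hpx
        exact ⟨q, hqPS, heq.symm⟩
      · exact ⟨p, ⟨hp, by simp [hpx]⟩, rfl⟩
  have hVcard : V.ncard + 1 ≤ (C.P.filter (fun p => p.2 = σ)).card := by
    have h1 : V.ncard ≤ (C.PSet σ \ {x}).ncard := by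
      rw [← hVeq]
      exact Set.ncard_image_le ((C.PSet_finite σ).diff)
    have h2 : (C.PSet σ \ {x}).ncard = (C.PSet σ).ncard - 1 :=
      Set.ncard_diff_singleton_of_mem hxPS
    have h3 : (C.PSet σ).ncard = (C.P.filter (fun p => p.2 = σ)).card := by
      rw [C.PSet_coe σ, Set.ncard_coe_finset]
    have h4 : 0 < (C.PSet σ).ncard := by
      rw [Set.ncard_pos (C.PSet_finite σ)]
      exact ⟨x, hxPS⟩
    omega
  -- find an unused term u of sort σ
  have hex : ∃ u : S.Term σ, (⟨σ, u⟩ : Tm S) ∉ V := by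
    set U : Set (S.Term σ) := {t | (⟨σ, t⟩ : Tm S) ∈ V} with hU
    have hUne : U ≠ Set.univ := by
      intro huniv
      have einj : Function.Injective (fun t : S.Term σ => (⟨σ, t⟩ : Tm S)) := by
        intro t t' h
        exact eq_of_heq (Sigma.mk.inj_iff.mp h).2
      have h5 : U.ncard ≤ V.ncard := by
        have h6 : (fun t : S.Term σ => (⟨σ, t⟩ : Tm S)) '' U ⊆ V := by
          rintro t ⟨t', ht', rfl⟩
          exact ht'
        calc U.ncard = ((fun t : S.Term σ => (⟨σ, t⟩ : Tm S)) '' U).ncard :=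
              (Set.ncard_image_of_injective U einj).symm
          _ ≤ V.ncard := Set.ncard_le_ncard h6 hVfin
      rw [huniv, Set.ncard_univ] at h5
      have h7 := hcardN σ hfx
      omega
    obtain ⟨u, hu⟩ := (Set.ne_univ_iff_exists_notMem U).mp hUne
    exact ⟨u, hu⟩
  obtain ⟨u, hu⟩ := hex
  refine ⟨Function.update v x u, ?_⟩
  set v' := Function.update v x u with hv'
  have hunch : ∀ p, p ≠ x → Finite (S.Term p.2) → Hs S p.2 ≤ Hs S σ →
      C.gb v' p = C.gb v p := C.unchanged_fin hS v u
  -- used at σ goes up by one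
  have himg : C.Gm v' '' C.PSet σ = insert (⟨σ, u⟩ : Tm S) V := by
    have h8 : C.PSet σ = insert x (C.PSet σ \ {x}) := by
      rw [Set.insert_diff_singleton, Set.insert_eq_of_mem hxPS]
    rw [h8, Set.image_insert_eq]
    have h9 : C.Gm v' x = ⟨σ, u⟩ := by
      show (⟨x.2, C.gb v' x⟩ : Tm S) = _
      rw [C.gb_free v' hxD, hv', Function.update_self]
    rw [h9]
    congr 1
    have h10 : ∀ p ∈ C.PSet σ \ {x}, C.Gm v' p = C.Gm v p := by
      rintro p ⟨⟨hpP, hp2⟩, hpx⟩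
      simp only [Set.mem_singleton_iff] at hpx
      apply C.Gm_congr
      apply hunch p hpx
      · rw [hp2]; exact hfx
      · rw [hp2]
    rw [Set.image_congr h10, hVeq]
  have hused : C.used v' σ = C.used v σ + 1 := by
    show (C.Gm v' '' C.PSet σ).ncard = (C.Gm v '' C.PSet σ).ncard + 1
    rw [himg, Set.ncard_insert_of_notMem hu hVfin, hV]
  have husedo : ∀ τ, τ ≠ σ → Finite (S.Term τ) → Hs S τ ≤ Hs S σ →
      C.used v' τ = C.used v τ := by
    intro τ hτ hfτ hHτ
    rw [used, used]
    congr 1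
    apply Set.image_congr
    rintro p ⟨hpP, hp2⟩
    apply C.Gm_congr
    apply hunch p
    · intro hpx; rw [hpx] at hp2; exact hτ hp2.symm
    · rw [hp2]; exact hfτ
    · rw [hp2]; exact hHτ
  -- the potential computation
  set e0 := HmaxS S - Hs S σ with he0
  set B := Finset.univ.filter (fun τ : Fin S.numSorts => Finite (S.Term τ) ∧ Hs S σ < Hs S τ) with hB
  set NB := Finset.univ.filter (fun τ : Fin S.numSorts => ¬(Finite (S.Term τ) ∧ Hs S σ < Hs S τ)) with hNB
  have hsplit : ∀ w : ∀ p : ℤ × Fin S.numSorts, S.Term p.2,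
      C.Phi w = ∑ τ ∈ B, C.wt w τ + ∑ τ ∈ NB, C.wt w τ := by
    intro w
    rw [Phi, ← Finset.sum_filter_add_sum_filter_not Finset.univ
      (fun τ : Fin S.numSorts => Finite (S.Term τ) ∧ Hs S σ < Hs S τ) (C.wt w)]
  have hσNB : σ ∈ NB := by
    simp only [hNB, Finset.mem_filter, Finset.mem_univ, true_and]
    rintro ⟨-, h⟩
    exact lt_irrefl _ h
  have hNBsum : ∀ w : ∀ p : ℤ × Fin S.numSorts, S.Term p.2,
      ∑ τ ∈ NB.erase σ, C.wt w τ + C.wt w σ = ∑ τ ∈ NB, C.wt w τ :=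
    fun w => Finset.sum_erase_add NB (C.wt w) hσNB
  have herase : ∑ τ ∈ NB.erase σ, C.wt v' τ = ∑ τ ∈ NB.erase σ, C.wt v τ := by
    apply Finset.sum_congr rfl
    intro τ hτ
    obtain ⟨hτne, hτNB⟩ := Finset.mem_erase.mp hτ
    simp only [hNB, Finset.mem_filter, Finset.mem_univ, true_and] at hτNB
    by_cases hfτ : Finite (S.Term τ)
    · have hHτ : Hs S τ ≤ Hs S σ := by
        by_contra hcon
        exact hτNB ⟨hfτ, lt_of_not_ge hcon⟩
      rw [wt, wt, if_pos hfτ, if_pos hfτ, husedo τ hτne hfτ hHτ]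
    · rw [wt, wt, if_neg hfτ, if_neg hfτ]
  have hwtσ : C.wt v' σ = C.wt v σ + C.KK ^ e0 := by
    rw [wt, wt, if_pos hfx, if_pos hfx, hused, add_mul, one_mul]
  have hBlt : ∑ τ ∈ B, C.wt v τ < C.KK ^ e0 := by
    rcases B.eq_empty_or_nonempty with hBe | hBne
    · rw [hBe, Finset.sum_empty]
      exact Nat.pow_pos C.KK_pos
    · have he01 : 1 ≤ e0 := by
        obtain ⟨τ, hτ⟩ := hBne
        simp only [hB, Finset.mem_filter, Finset.mem_univ, true_and] at hτ
        have := Hs_le_HmaxS (S := S) hτ.1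
        omega
      have hterm : ∀ τ ∈ B, C.wt v τ ≤ C.P.card * C.KK ^ (e0 - 1) := by
        intro τ hτ
        simp only [hB, Finset.mem_filter, Finset.mem_univ, true_and] at hτ
        rw [wt, if_pos hτ.1]
        apply Nat.mul_le_mul (C.used_le v τ)
        apply Nat.pow_le_pow_right C.KK_pos
        have := Hs_le_HmaxS (S := S) hτ.1
        omega
      have hsum := Finset.sum_le_card_nsmul B (C.wt v) _ hterm
      have hcard : B.card ≤ S.numSorts := by
        rw [hB]
        have h := Finset.card_filter_le (Finset.univ : Finset (Fin S.numSorts))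
          (fun τ => Finite (S.Term τ) ∧ Hs S σ < Hs S τ)
        simpa using h
      have hlt : S.numSorts * C.P.card * C.KK ^ (e0 - 1) < C.KK ^ e0 := by
        have h11 : C.KK ^ e0 = C.KK * C.KK ^ (e0 - 1) := by
          conv_lhs => rw [show e0 = 1 + (e0 - 1) by omega]
          rw [pow_add, pow_one]
        rw [h11]
        have hkp : 0 < C.KK ^ (e0 - 1) := Nat.pow_pos C.KK_pos
        have hlt2 : S.numSorts * C.P.card < C.KK := by rw [KK]; omega
        exact mul_lt_mul_of_pos_right hlt2 hkp
      calc ∑ τ ∈ B, C.wt v τ ≤ B.card • (C.P.card * C.KK ^ (e0 - 1)) := hsum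
        _ = B.card * (C.P.card * C.KK ^ (e0 - 1)) := by rw [smul_eq_mul]
        _ ≤ S.numSorts * (C.P.card * C.KK ^ (e0 - 1)) := Nat.mul_le_mul_right _ hcard
        _ = S.numSorts * C.P.card * C.KK ^ (e0 - 1) := by ring
        _ < C.KK ^ e0 := hlt
  have h12 := hsplit v
  have h13 := hsplit v'
  have h14 := hNBsum v
  have h15 := hNBsum v'
  have h16 : 0 ≤ ∑ τ ∈ B, C.wt v' τ := Nat.zero_le _
  omega


/-- repair step at an infinite sort: potential unchanged, collision count drops -/
lemma inf_repair (hS : S.WellDefined)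
    (v : ∀ p : ℤ × Fin S.numSorts, S.Term p.2) {x q : ℤ × Fin S.numSorts}
    (hxP : x ∈ C.P) (hqP : q ∈ C.P) (hne : x ≠ q) (hxD : x ∉ C.D)
    (heq : C.Gm v x = C.Gm v q) (hfx : ¬ Finite (S.Term x.2)) :
    ∃ v', C.Phi v' = C.Phi v ∧ C.cnt v' < C.cnt v := by
  classical
  set B0 := C.P.sup (fun p => (C.gb v p).size) with hB0def
  have hB0 : ∀ p ∈ C.P, (C.gb v p).size ≤ B0 :=
    fun p hp => Finset.le_sup (f := fun p => (C.gb v p).size) hp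
  obtain ⟨u, hu⟩ := exists_big x.2 (not_finite_iff_infinite.mp hfx) B0
  refine ⟨Function.update v x u, ?_, ?_⟩
  · -- potential unchanged
    rw [Phi, Phi]
    apply Finset.sum_congr rfl
    intro τ _
    by_cases hfτ : Finite (S.Term τ)
    · rw [wt, wt, if_pos hfτ, if_pos hfτ]
      congr 1
      rw [used, used]
      congr 1
      apply Set.image_congr
      rintro p ⟨hpP, hp2⟩
      apply C.Gm_congr
      exact C.unchanged_inf hS v u hfx p (by rw [hp2]; exact hfτ)
    · rw [wt, wt, if_neg hfτ, if_neg hfτ]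
  · -- collision count drops
    set v' := Function.update v x u with hv'
    have hGx : C.Gm v' x = ⟨x.2, u⟩ := by
      show (⟨x.2, C.gb v' x⟩ : Tm S) = _
      rw [C.gb_free v' hxD, hv', Function.update_self]
    have dich := C.update_big v hxD u
    rw [← hv'] at dich
    -- any element other than x is either unchanged (small) or big
    have hGnex : ∀ r ∈ C.P, r ≠ x → C.Gm v' r ≠ C.Gm v' x := by
      intro r hrP hrx hcon
      rw [hGx] at hcon
      have hsz : (C.gb v' r).size = u.size := by
        have := congrArg (fun t : Tm S => t.2.size) hcon
        exact this
      rcases dich r hrx with h1 | h1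
      · have h2 := hB0 r hrP
        rw [h1] at hsz
        omega
      · omega
    apply Set.ncard_lt_ncard _ (C.colset_finite v)
    constructor
    · -- colset v' ⊆ colset v
      rintro ⟨p, r⟩ ⟨hpP, hrP, hpr, hpD, hGeq⟩
      have hpx : p ≠ x := by
        rintro rfl
        exact hGnex r hrP (fun h => hpr h.symm) hGeq.symm
      have hrx : r ≠ x := by
        rintro rfl
        exact hGnex p hpP hpx hGeq
      have hpu : C.gb v' p = C.gb v p := by
        rw [C.gb_free v' hpD, C.gb_free v hpD, hv']
        exact Function.update_of_ne hpx u v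
      have hru : C.gb v' r = C.gb v r := by
        rcases dich r hrx with h1 | h1
        · exact h1
        · exfalso
          have hsz : (C.gb v' p).size = (C.gb v' r).size := C.Gm_size v' hGeq
          have h2 := hB0 p hpP
          rw [hpu] at hsz
          omega
      refine ⟨hpP, hrP, hpr, hpD, ?_⟩
      rw [← C.Gm_congr v v' hpu, ← C.Gm_congr v v' hru]
      exact hGeq
    · -- strictness: (x, q) is in colset v but not colset v'
      intro hsub
      have hmem : (x, q) ∈ C.colset v := ⟨hxP, hqP, hne, hxD, heq⟩
      -- show (x, q) ∉ colset v' ; but also ⊆ means colset v ⊆ colset v' : contradiction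
      have hmem' := hsub hmem
      obtain ⟨-, -, -, -, hGeq'⟩ := hmem'
      exact hGnex q hqP (fun h => hne h.symm) hGeq'.symm


/-- main loop: repair until there are no collisions -/
lemma no_collision (hS : S.WellDefined)
    (hcardN : ∀ σ, Finite (S.Term σ) →
      (C.P.filter (fun p => p.2 = σ)).card ≤ Nat.card (S.Term σ)) :
    ∀ (n : ℕ) (v : ∀ p : ℤ × Fin S.numSorts, S.Term p.2),
      (C.Phimax - C.Phi v) * (C.P.card * C.P.card + 1) + C.cnt v ≤ n →
      ∃ v', ∀ p ∈ C.P, ∀ q ∈ C.P, p ≠ q → C.Gm v' p ≠ C.Gm v' q := by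
  intro n
  induction n using Nat.strong_induction_on with
  | _ n ih =>
    intro v hn
    by_cases hcol : ∃ p ∈ C.P, ∃ q ∈ C.P, p ≠ q ∧ C.Gm v p = C.Gm v q
    · obtain ⟨x, hxP, q, hqP, hne, hxD, heq⟩ := C.exists_free_collision v hcol
      by_cases hfx : Finite (S.Term x.2)
      · obtain ⟨v', hlt⟩ := C.fin_repair hS hcardN v hxP hqP hne hxD heq hfx
        have hm : (C.Phimax - C.Phi v') * (C.P.card * C.P.card + 1) + C.cnt v' <
            (C.Phimax - C.Phi v) * (C.P.card * C.P.card + 1) + C.cnt v := by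
          have h1 := C.Phi_le v'
          have h2 := C.Phi_le v
          have h3 := C.cnt_le v'
          set M := C.P.card * C.P.card with hM
          have h4 : C.Phimax - C.Phi v' + 1 ≤ C.Phimax - C.Phi v := by omega
          calc (C.Phimax - C.Phi v') * (M + 1) + C.cnt v'
              < (C.Phimax - C.Phi v') * (M + 1) + (M + 1) := by omega
            _ = (C.Phimax - C.Phi v' + 1) * (M + 1) := by ring
            _ ≤ (C.Phimax - C.Phi v) * (M + 1) := Nat.mul_le_mul_right _ h4
            _ ≤ (C.Phimax - C.Phi v) * (M + 1) + C.cnt v := Nat.le_add_right _ _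
        exact ih _ (lt_of_lt_of_le hm hn) v' le_rfl
      · obtain ⟨v', hPhi, hcnt⟩ := C.inf_repair hS v hxP hqP hne hxD heq hfx
        have hm : (C.Phimax - C.Phi v') * (C.P.card * C.P.card + 1) + C.cnt v' <
            (C.Phimax - C.Phi v) * (C.P.card * C.P.card + 1) + C.cnt v := by
          rw [hPhi]
          exact Nat.add_lt_add_left hcnt _
        exact ih _ (lt_of_lt_of_le hm hn) v' le_rfl
    · push_neg at hcol
      exact ⟨v, hcol⟩

end Ctx


end MC

open ADTSig in
/-- The model-construction core of the completeness direction of the reduction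
theorem: given a finite set `P` of (integer index, sort) pairs, a subset `D`
whose elements are assigned a constructor `depF p` and integer children
`depC p 0, depC p 1, …` (of the argument sorts, all in `P`), such that
(i) distinct elements of `D` with the same constructor have different child
tuples, and (ii) there is a `depth` function decreasing from every element of
`D` to its children, and such that for every sort the number of pairs of that
sort in `P` is at most `|𝕋_σ|`, there is an injective map `γ` of `P` into the
constructor terms, mapping each pair to a term of its sort and respecting the
constructor/children structure on `D`. -/
theorem model_construction (S : ADTSig) (hS : S.WellDefined)
    (P : Finset (ℤ × Fin S.numSorts))
    (hdistinct : ∀ p ∈ P, ∀ q ∈ P, p.2 = q.2 → p.1 = q.1 → p = q)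
    (hcard : ∀ σ : Fin S.numSorts,
       ((P.filter (fun p => p.2 = σ)).card : Cardinal) ≤ Cardinal.mk (S.Term σ))
    (D : Finset (ℤ × Fin S.numSorts)) (hD : D ⊆ P)
    (depF : ℤ × Fin S.numSorts → Fin S.numCtors)
    (depC : ℤ × Fin S.numSorts → ℕ → ℤ)
    (hdep : ∀ p ∈ D, S.ctorRes (depF p) = p.2 ∧
       ∀ j : Fin (S.ctorArgs (depF p)).length,
         (depC p j.val, (S.ctorArgs (depF p)).get j) ∈ P)
    (hinj : ∀ p ∈ D, ∀ q ∈ D, depF p = depF q →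
       (∀ j < (S.ctorArgs (depF p)).length, depC p j = depC q j) → p = q)
    (depth : ℤ × Fin S.numSorts → ℤ)
    (hdepth : ∀ p ∈ D, ∀ j : Fin (S.ctorArgs (depF p)).length,
       depth (depC p j.val, (S.ctorArgs (depF p)).get j) < depth p) :
    ∃ γ : (p : ℤ × Fin S.numSorts) → S.Term p.2,
      (∀ p ∈ P, ∀ q ∈ P, (⟨p.2, γ p⟩ : Σ σ, S.Term σ) = ⟨q.2, γ q⟩ → p = q) ∧
      ∀ p ∈ D, ∃ h : S.ctorRes (depF p) = p.2,
        γ p = cast (congrArg S.Term h)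
          (Term.mk (depF p)
            (fun j => γ (depC p j.val, (S.ctorArgs (depF p)).get j))) := by
    classical
  set C : MC.Ctx S := ⟨P, D, depF, depC, depth, hD, fun p hp => (hdep p hp).1,
    fun p hp => (hdep p hp).2, hinj, hdepth⟩ with hC
  have hcardN : ∀ σ, Finite (S.Term σ) →
      (C.P.filter (fun p => p.2 = σ)).card ≤ Nat.card (S.Term σ) := by
    intro σ hf
    have h1 := hcard σ
    rw [← Nat.cast_card (α := S.Term σ)] at h1
    exact_mod_cast h1
  set v0 : ∀ p : ℤ × Fin S.numSorts, S.Term p.2 := fun p => Classical.choice (hS p.2) with hv0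
  obtain ⟨v, hv⟩ := C.no_collision hS hcardN
    ((C.Phimax - C.Phi v0) * (C.P.card * C.P.card + 1) + C.cnt v0) v0 le_rfl
  refine ⟨C.gb v, ?_, ?_⟩
  · intro p hp q hq hpq
    by_contra hne
    exact hv p hp q hq hne hpq
  · intro p hp
    exact ⟨(hdep p hp).1, C.gb_dep v hp⟩
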